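/- Let H be a finite graph with n = |V(H)| vertices. Then det(T·Id_n − Δ(H)) = T^n + Σ_{j=1}^{n−1} (−1)^j b_j(H) T^{n−j}, where b_j(H) = Σ_F mult(F), the sum running over all spanning forests F of H with n−j components; equivalently, b_j(H) equals the number of rooted spanning forests of H with n−j components. -/

import Mathlib

open scoped Classical
open Polynomial BigOperators Matrix

namespace Mesh

variable {V E : Type}

/-- One undirected step between vertices along an edge in `S`. -/
def Step (src tgt : E → V) (S : Finset E) (a b : V) : Prop :=
  ∃ e ∈ S, (src e = a ∧ tgt e = b) ∨ (src e = b ∧ tgt e = a)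

/-- Reachability within the subgraph with edge set `S`. -/
def Reach (src tgt : E → V) (S : Finset E) (a b : V) : Prop :=
  Relation.EqvGen (Step src tgt S) a b

/-- The spanning subgraph with edge set `S` is connected. -/
def ConnectedVia (src tgt : E → V) (S : Finset E) : Prop :=
  ∀ a b : V, Reach src tgt S a b

/-- `S` is the edge set of a spanning tree: connected and `|V| - 1` edges. -/
def IsSpanningTree [Fintype V] (src tgt : E → V) (S : Finset E) : Prop :=
  ConnectedVia src tgt S ∧ S.card + 1 = Fintype.card V

/-- Number of spanning trees of the multigraph `(V, E, src, tgt)`. -/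
noncomputable def ST [Fintype V] (src tgt : E → V) : ℕ :=
  Nat.card {S : Finset E // IsSpanningTree src tgt S}

/-- `ST_j(G, T0)`: number of spanning trees having exactly `j` edges outside `T0`. -/
noncomputable def STj [Fintype V] [DecidableEq E] (src tgt : E → V) (T0 : Finset E) (j : ℕ) : ℕ :=
  Nat.card {S : Finset E // IsSpanningTree src tgt S ∧ (S \ T0).card = j}

/-- Boundary of an integral 1-chain. -/
def bdry [Fintype E] [DecidableEq V] (src tgt : E → V) (c : E → ℤ) : V → ℤ :=
  fun v => ∑ e, c e * ((if tgt e = v then 1 else 0) - (if src e = v then 1 else 0))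

/-- The fundamental cycle `Z[j] = e_j + D(e_j)`. -/
def Zchain [DecidableEq E] (T0 : Finset E) (D : {e : E // e ∉ T0} → E → ℤ)
    (j : {e : E // e ∉ T0}) : E → ℤ :=
  fun e => (if e = (j : E) then 1 else 0) + D j e

/-- `D` assigns to each non-tree edge the (unique) chain supported in the tree `T0`
making `Z[j] = e_j + D(e_j)` a cycle; for a spanning tree this characterizes the
signed sum of edges of the tree path from the head to the tail of `e_j`. -/
def IsPathData [Fintype V] [Fintype E] [DecidableEq V] [DecidableEq E]
    (src tgt : E → V) (T0 : Finset E) (D : {e : E // e ∉ T0} → E → ℤ) : Prop :=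
  (∀ j f, D j f ≠ 0 → f ∈ T0) ∧ ∀ j, bdry src tgt (Zchain T0 D j) = 0

/-- The mesh matrix `Mesh(G,T0)` with entries `⟨Z[j₁], Z[j₂]⟩`. -/
noncomputable def MeshM [Fintype E] [DecidableEq E] (T0 : Finset E)
    (D : {e : E // e ∉ T0} → E → ℤ) :
    Matrix {e : E // e ∉ T0} {e : E // e ∉ T0} ℤ :=
  Matrix.of fun j₁ j₂ => ∑ e, Zchain T0 D j₁ e * Zchain T0 D j₂ e

/-- The matrix `Y` of the map `D` in the edge bases. -/
noncomputable def Ymat [DecidableEq E] (T0 : Finset E) (D : {e : E // e ∉ T0} → E → ℤ) :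
    Matrix {f : E // f ∈ T0} {e : E // e ∉ T0} ℤ :=
  Matrix.of fun k j => D j (k : E)

/-- The Kirchhoff Laplacian `Deg - Adj` of a multigraph. -/
noncomputable def LapDegAdj {V' E' : Type} [Fintype E'] [DecidableEq V'] (s t : E' → V') :
    Matrix V' V' ℤ :=
  Matrix.of fun a b =>
    (if a = b then
        ((Finset.univ.filter fun e => s e = a).card + (Finset.univ.filter fun e => t e = a).card : ℤ)
      else 0)
    - ((Finset.univ.filter fun e => (s e = a ∧ t e = b) ∨ (s e = b ∧ t e = a)).card : ℤ)

/-- The incidence coefficient of vertex `v` in `∂e`. -/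
def inc [DecidableEq V] (src tgt : E → V) (e : E) (v : V) : ℤ :=
  (if tgt e = v then 1 else 0) - (if src e = v then 1 else 0)

/-- Source map of the cone `C'(H)`: vertices `Option V` (with `none = W`),
edges `E ⊕ V` (`inl` the edges of `H`, `inr P` the cone edge `P → W`). -/
def coneSrc (src : E → V) : E ⊕ V → Option V
  | Sum.inl e => some (src e)
  | Sum.inr p => some p

/-- Target map of the cone `C'(H)`. -/
def coneTgt (tgt : E → V) : E ⊕ V → Option V
  | Sum.inl e => some (tgt e)
  | Sum.inr _ => none

/-- The edge set of the cone subgraph `C(V(H))` of `C'(H)`. -/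
noncomputable def coneTree (E V : Type) [Fintype E] [Fintype V] : Finset (E ⊕ V) :=
  Finset.univ.filter fun x => x.isRight = true

/-- The tree chain `D(e) = (Q → W) - (P → W)` for the pair `(C'(H), C(V(H)))`. -/
def coneD [DecidableEq V] [DecidableEq E] (src tgt : E → V) (e : E) : E ⊕ V → ℤ :=
  fun x => (if x = Sum.inr (tgt e) then 1 else 0) - (if x = Sum.inr (src e) then 1 else 0)

/-- The boundary map as a homomorphism of abelian groups. -/
noncomputable def bdryHom [Fintype E] [DecidableEq V] (src tgt : E → V) :
    (E → ℤ) →+ (V → ℤ) where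
  toFun := bdry src tgt
  map_zero' := by funext v; simp [bdry]
  map_add' := by
    intro a b
    funext v
    simp [bdry, add_mul, Finset.sum_add_distrib]

/-- `Π ∘ ∂*` : the composition of the coboundary with the identification `Π`. -/
noncomputable def cobdryHom (src tgt : E → V) : (V → ℤ) →+ (E → ℤ) where
  toFun := fun g e => g (tgt e) - g (src e)
  map_zero' := by funext e; simp
  map_add' := by
    intro a b
    funext e
    simp only [Pi.add_apply]
    ring

/-- The reachability setoid of the spanning subgraph with edge set `F`. -/
def reachSetoid (src tgt : E → V) (F : Finset E) : Setoid V :=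
  ⟨Relation.EqvGen (Step src tgt F), Relation.EqvGen.is_equivalence _⟩

/-- Number of connected components of the spanning subgraph with edge set `F`. -/
noncomputable def ncomp (src tgt : E → V) (F : Finset E) : ℕ :=
  Nat.card (Quotient (reachSetoid src tgt F))

/-- `F` is (the edge set of) a spanning forest. -/
def IsSpForest [Fintype V] (src tgt : E → V) (F : Finset E) : Prop :=
  F.card + ncomp src tgt F = Fintype.card V

/-- `mult(F)`: the product of the numbers of vertices of the components of `F`. -/
noncomputable def multF (src tgt : E → V) (F : Finset E) : ℕ :=
  ∏ᶠ q : Quotient (reachSetoid src tgt F),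
    Nat.card {v : V // Quotient.mk (reachSetoid src tgt F) v = q}

/-- `(F, R)` is a rooted spanning forest: `R` has exactly one root in each component. -/
def IsRootedSF [Fintype V] (src tgt : E → V) (F : Finset E) (R : Finset V) : Prop :=
  IsSpForest src tgt F ∧
    ∀ v : V, ∃! u : V, u ∈ R ∧ Relation.EqvGen (Step src tgt F) u v

/-- The polynomial `ST(G,H)(X) = Σ_{j=0}^{N} (-1)^j ST_j(G,H) X^{N-j}`, `N = |E(G)-E(H)|`. -/
noncomputable def STpoly [Fintype V] [Fintype E] [DecidableEq E] (src tgt : E → V)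
    (HE : Finset E) : Polynomial ℤ :=
  ∑ j ∈ Finset.range (HEᶜ.card + 1),
    Polynomial.C ((-1 : ℤ) ^ j * (STj src tgt HE j : ℤ)) * Polynomial.X ^ (HEᶜ.card - j)

/-- The vertex map of the contraction `G/e₀`: `src e₀` is identified with `tgt e₀`. -/
def contrV [DecidableEq V] (src tgt : E → V) (e0 : E) (h : src e0 ≠ tgt e0) (v : V) :
    {w : V // w ≠ src e0} :=
  if hv : v = src e0 then ⟨tgt e0, Ne.symm h⟩ else ⟨v, hv⟩

/-- Source of a directed edge `(e, b)` (`b = true`: the chosen direction). -/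
def dsrc (src tgt : E → V) (x : E × Bool) : V := if x.2 then src x.1 else tgt x.1

/-- Target of a directed edge `(e, b)`. -/
def dtgt (src tgt : E → V) (x : E × Bool) : V := if x.2 then tgt x.1 else src x.1

/-- A non-tree edge is of type 3 when its tree path has length ≥ 2. -/
noncomputable def Type3 [Fintype E] (T0 : Finset E) (D : {e : E // e ∉ T0} → E → ℤ)
    (j : {e : E // e ∉ T0}) : Prop :=
  2 ≤ (Finset.univ.filter fun f => D j f ≠ 0).card



section Aux
variable [DecidableEq E] {src tgt : E → V} {S T : Finset E} {a b c : V}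

lemma reach_refl (a : V) : Reach src tgt S a a := Relation.EqvGen.refl a
lemma reach_symm (h : Reach src tgt S a b) : Reach src tgt S b a := Relation.EqvGen.symm _ _ h
lemma reach_trans (h : Reach src tgt S a b) (h' : Reach src tgt S b c) : Reach src tgt S a c :=
  Relation.EqvGen.trans _ _ _ h h'
lemma reach_step (h : Step src tgt S a b) : Reach src tgt S a b := Relation.EqvGen.rel _ _ h

lemma reach_mono (hST : S ⊆ T) (h : Reach src tgt S a b) : Reach src tgt T a b := by
  refine Relation.EqvGen.mono ?_ _ _ h
  rintro x y ⟨e, he, hx⟩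
  exact ⟨e, hST he, hx⟩

lemma reach_iff_inv (P : V → Prop) (hS : ∀ a b, Step src tgt S a b → (P a ↔ P b))
    (h : Reach src tgt S a b) : P a ↔ P b := by
  induction h with
  | rel x y hxy => exact hS _ _ hxy
  | refl x => exact Iff.rfl
  | symm x y _ ih => exact ih.symm
  | trans x y z _ _ ih1 ih2 => exact ih1.trans ih2

lemma reach_isolated {v : V} (hv : ∀ e ∈ S, src e ≠ v ∧ tgt e ≠ v)
    (h : Reach src tgt S v b) : v = b := by
  have key := reach_iff_inv (fun x => x = v) ?_ h
  · exact (key.mp rfl).symm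
  · rintro x y ⟨e, he, ⟨h1, h2⟩ | ⟨h1, h2⟩⟩ <;>
      constructor <;> intro hh <;> exfalso
    · exact (hv e he).1 (h1.trans hh)
    · exact (hv e he).2 (h2.trans hh)
    · exact (hv e he).2 (h2.trans hh)
    · exact (hv e he).1 (h1.trans hh)

lemma reach_empty : Reach src tgt (∅ : Finset E) a b ↔ a = b := by
  constructor
  · intro h
    induction h with
    | rel x y hxy => exact absurd hxy (by rintro ⟨e, he, -⟩; exact absurd he (Finset.notMem_empty e))
    | refl x => rfl
    | symm x y _ ih => exact ih.symm
    | trans x y z _ _ ih1 ih2 => exact ih1.trans ih2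
  · rintro rfl; exact reach_refl a

lemma reach_insert {t : E} :
    Reach src tgt (insert t S) a b ↔ Reach src tgt S a b
      ∨ (Reach src tgt S a (src t) ∧ Reach src tgt S (tgt t) b)
      ∨ (Reach src tgt S a (tgt t) ∧ Reach src tgt S (src t) b) := by
  constructor
  · intro h
    induction h with
    | rel x y hxy =>
      obtain ⟨e, he, ⟨h1, h2⟩ | ⟨h1, h2⟩⟩ := hxy
      · rcases Finset.mem_insert.mp he with rfl | heS
        · exact Or.inr (Or.inl ⟨h1 ▸ reach_refl _, h2 ▸ reach_refl _⟩)
        · exact Or.inl (reach_step ⟨e, heS, Or.inl ⟨h1, h2⟩⟩)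
      · rcases Finset.mem_insert.mp he with rfl | heS
        · exact Or.inr (Or.inr ⟨h2 ▸ reach_refl _, h1 ▸ reach_refl _⟩)
        · exact Or.inl (reach_step ⟨e, heS, Or.inr ⟨h1, h2⟩⟩)
    | refl x => exact Or.inl (reach_refl x)
    | symm x y _ ih =>
      rcases ih with h1 | ⟨h1, h2⟩ | ⟨h1, h2⟩
      · exact Or.inl (reach_symm h1)
      · exact Or.inr (Or.inr ⟨reach_symm h2, reach_symm h1⟩)
      · exact Or.inr (Or.inl ⟨reach_symm h2, reach_symm h1⟩)
    | trans x y z _ _ ih1 ih2 =>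
      rcases ih1 with h1 | ⟨h1, h1'⟩ | ⟨h1, h1'⟩ <;>
        rcases ih2 with h2 | ⟨h2, h2'⟩ | ⟨h2, h2'⟩
      · exact Or.inl (reach_trans h1 h2)
      · exact Or.inr (Or.inl ⟨reach_trans h1 h2, h2'⟩)
      · exact Or.inr (Or.inr ⟨reach_trans h1 h2, h2'⟩)
      · exact Or.inr (Or.inl ⟨h1, reach_trans h1' h2⟩)
      · exact Or.inr (Or.inl ⟨h1, h2'⟩)
      · exact Or.inl (reach_trans h1 h2')
      · exact Or.inr (Or.inr ⟨h1, reach_trans h1' h2⟩)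
      · exact Or.inl (reach_trans h1 h2')
      · exact Or.inr (Or.inr ⟨h1, h2'⟩)
  · rintro (h | ⟨h1, h2⟩ | ⟨h1, h2⟩)
    · exact reach_mono (Finset.subset_insert t S) h
    · exact reach_trans (reach_mono (Finset.subset_insert t S) h1)
        (reach_trans (reach_step ⟨t, Finset.mem_insert_self t S, Or.inl ⟨rfl, rfl⟩⟩)
          (reach_mono (Finset.subset_insert t S) h2))
    · exact reach_trans (reach_mono (Finset.subset_insert t S) h1)
        (reach_trans (reach_step ⟨t, Finset.mem_insert_self t S, Or.inr ⟨rfl, rfl⟩⟩)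
          (reach_mono (Finset.subset_insert t S) h2))


section BV
variable [Fintype V]
/-- `R` is a set of roots for the edge set `T`: every vertex reaches exactly one root. -/
def Good (src tgt : E → V) (R : Finset V) (T : Finset E) : Prop :=
  ∀ v : V, ∃! u : V, u ∈ R ∧ Reach src tgt T u v

lemma quotMk_eq_iff {v u : V} :
    (Quotient.mk (reachSetoid src tgt F) v = Quotient.mk (reachSetoid src tgt F) u)
      ↔ Reach src tgt F v u :=
  ⟨fun h => Quotient.exact h, fun h => Quotient.sound h⟩

lemma ncomp_eq_card_of_good (h : Good src tgt R F) : ncomp src tgt F = R.card := by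
  have e : {u // u ∈ R} ≃ Quotient (reachSetoid src tgt F) := by
    refine Equiv.ofBijective (fun r => Quotient.mk _ r.1) ⟨?_, ?_⟩
    · rintro ⟨r1, h1⟩ ⟨r2, h2⟩ hq
      have hrel : Reach src tgt F r1 r2 := quotMk_eq_iff.mp hq
      obtain ⟨u, -, hu⟩ := h r2
      exact Subtype.ext ((hu r1 ⟨h1, hrel⟩).trans (hu r2 ⟨h2, reach_refl r2⟩).symm)
    · intro q
      induction q using Quotient.inductionOn with
      | h v =>
        obtain ⟨u, ⟨hu1, hu2⟩, -⟩ := h v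
        exact ⟨⟨u, hu1⟩, Quotient.sound hu2⟩
  rw [ncomp, ← Nat.card_congr e, Nat.card_eq_fintype_card, Fintype.card_coe]

lemma isRootedSF_iff_good (hcard : F.card + R.card = Fintype.card V) :
    IsRootedSF src tgt F R ↔ Good src tgt R F := by
  constructor
  · exact fun h => h.2
  · intro h
    exact ⟨by rwa [IsSpForest, ncomp_eq_card_of_good h], h⟩

lemma isRootedSF_good (h : IsRootedSF src tgt F R) : Good src tgt R F := h.2

lemma card_good_roots (F : Finset E) :
    Nat.card {R : Finset V // Good src tgt R F} = multF src tgt F := by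
  set Q := Quotient (reachSetoid src tgt F)
  have Φbij : Function.Bijective
      (fun (s : ∀ q : Q, {v : V // Quotient.mk (reachSetoid src tgt F) v = q}) =>
        (⟨Finset.univ.image fun q => (s q).1, by
          intro v
          refine ⟨(s (Quotient.mk _ v)).1, ⟨Finset.mem_image_of_mem _ (Finset.mem_univ _),
            quotMk_eq_iff.mp (s (Quotient.mk _ v)).2⟩, ?_⟩
          rintro u ⟨hu1, hu2⟩
          obtain ⟨q', -, hq'⟩ := Finset.mem_image.mp hu1
          have : q' = Quotient.mk (reachSetoid src tgt F) v := by
            rw [← (s q').2, hq']; exact quotMk_eq_iff.mpr hu2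
          rw [← hq', this]⟩ : {R : Finset V // Good src tgt R F})) := by
    constructor
    · intro s s' hss'
      have him : (Finset.univ.image fun q => (s q).1) = Finset.univ.image fun q => (s' q).1 :=
        congrArg Subtype.val hss'
      funext q
      have h1 : (s q).1 ∈ Finset.univ.image fun q => (s' q).1 := by
        rw [← him]; exact Finset.mem_image_of_mem _ (Finset.mem_univ _)
      obtain ⟨q', -, hq'⟩ := Finset.mem_image.mp h1
      have : q' = q := by rw [← (s' q').2, hq', (s q).2]
      exact Subtype.ext (by rw [← hq', this])
    · rintro ⟨R, hR⟩
      have hex : ∀ q : Q, ∃ u : V, (u ∈ R ∧ Reach src tgt F u q.out) := fun q =>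
        ⟨(hR q.out).choose, (hR q.out).choose_spec.1⟩
      refine ⟨fun q => ⟨(hex q).choose, ?_⟩, Subtype.ext ?_⟩
      · rw [quotMk_eq_iff.mpr (hex q).choose_spec.2]; exact q.out_eq
      · ext r
        simp only [Finset.mem_image, Finset.mem_univ, true_and]
        constructor
        · rintro ⟨q, rfl⟩; exact (hex q).choose_spec.1
        · intro hr
          refine ⟨Quotient.mk _ r, ?_⟩
          obtain ⟨u, -, hu⟩ := hR (Quotient.mk (reachSetoid src tgt F) r).out
          have h1 := hu _ (hex (Quotient.mk (reachSetoid src tgt F) r)).choose_spec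
          have h2 := hu r ⟨hr, quotMk_eq_iff.mp (Quotient.out_eq _).symm⟩
          rw [h1, ← h2]
  calc Nat.card {R : Finset V // Good src tgt R F}
      = Nat.card (∀ q : Q, {v : V // Quotient.mk (reachSetoid src tgt F) v = q}) :=
        (Nat.card_congr (Equiv.ofBijective _ Φbij)).symm
    _ = ∏ q : Q, Nat.card {v : V // Quotient.mk (reachSetoid src tgt F) v = q} :=
        Nat.card_pi
    _ = multF src tgt F := by rw [multF, finprod_eq_prod_of_fintype]


end BV
end Aux

/-- Single special row: expansion of the determinant. -/
lemma det_row_single {ι A : Type} [Fintype ι] [DecidableEq ι] [CommRing A]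
    (M : Matrix ι ι A) (i : ι) (h : ∀ j, j ≠ i → M i j = 0) :
    M.det = M i i *
      (M.submatrix (fun k : {j : ι // ¬ j = i} => (k : ι))
        (fun k : {j : ι // ¬ j = i} => (k : ι))).det := by
  classical
  let e := Equiv.sumCompl (fun j : ι => j = i)
  rw [← Matrix.det_submatrix_equiv_self e M]
  rw [← Matrix.fromBlocks_toBlocks (M.submatrix e e)]
  have h12 : (M.submatrix e e).toBlocks₁₂ = 0 := by
    ext a b
    have ha : (a : ι) = i := a.2
    simp only [Matrix.toBlocks₁₂, Matrix.submatrix_apply, Matrix.of_apply]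
    show M (a : ι) (b : ι) = 0
    rw [ha]
    exact h _ b.2
  rw [h12, Matrix.det_fromBlocks_zero₁₂, Matrix.det_unique]
  congr 1

/-- Rows in `S` are `x` times the corresponding standard basis vector. -/
lemma det_diag_rows {A : Type} [CommRing A] :
    ∀ (k : ℕ) {ι : Type} [Fintype ι] [DecidableEq ι] (M : Matrix ι ι A) (x : A) (S : Finset ι),
      S.card = k → (∀ i ∈ S, ∀ j, M i j = if i = j then x else 0) →
      M.det = x ^ k *
        (M.submatrix (fun v : {i : ι // i ∉ S} => (v : ι))
          (fun v : {i : ι // i ∉ S} => (v : ι))).det := by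
  intro k
  induction k with
  | zero =>
    intro ι _ _ M x S hS _
    rw [Finset.card_eq_zero] at hS
    subst hS
    rw [pow_zero, one_mul]
    let e : {i : ι // i ∉ (∅ : Finset ι)} ≃ ι :=
      Equiv.subtypeUnivEquiv (fun v => Finset.notMem_empty v)
    rw [← Matrix.det_submatrix_equiv_self e M]
    rfl
  | succ k ih =>
    intro ι _ _ M x S hS hrows
    have hne : S.Nonempty := Finset.card_pos.mp (hS ▸ Nat.succ_pos k)
    obtain ⟨i, hi⟩ := hne
    have hrowi : ∀ j, j ≠ i → M i j = 0 := by
      intro j hj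
      rw [hrows i hi j, if_neg (fun hc => hj hc.symm)]
    rw [det_row_single M i hrowi, hrows i hi i, if_pos rfl]
    set ι' := {j : ι // ¬ j = i}
    set M' : Matrix ι' ι' A := M.submatrix (fun k => (k : ι)) (fun k => (k : ι)) with hM'
    set S' : Finset ι' := S.subtype (fun j => ¬ j = i) with hS'
    have hcard' : S'.card = k := by
      rw [hS', Finset.card_subtype]
      have h2 : S.filter (fun j => ¬ j = i) = S.erase i := Finset.filter_ne' S i
      rw [h2, Finset.card_erase_of_mem hi, hS]
      omega
    have hrows' : ∀ i' ∈ S', ∀ j', M' i' j' = if i' = j' then x else 0 := by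
      intro i' hi' j'
      have : (i' : ι) ∈ S := Finset.mem_subtype.mp hi'
      rw [hM']
      simp only [Matrix.submatrix_apply]
      rw [hrows _ this]
      by_cases hij : i' = j'
      · rw [if_pos hij, if_pos (congrArg Subtype.val hij)]
      · rw [if_neg hij, if_neg (fun hc => hij (Subtype.ext hc))]
    rw [ih M' x S' hcard' hrows']
    have hiS' : ∀ v : ι', v ∉ S' ↔ (v : ι) ∉ S := by
      intro v
      rw [hS']
      exact not_congr Finset.mem_subtype
    let φ : {v : ι // v ∉ S} ≃ {v : ι' // v ∉ S'} :=
      { toFun := fun w => ⟨⟨w.1, fun hc => w.2 (hc ▸ hi)⟩, (hiS' _).mpr w.2⟩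
        invFun := fun u => ⟨u.1.1, (hiS' _).mp u.2⟩
        left_inv := fun w => rfl
        right_inv := fun u => rfl }
    have hdet : (M'.submatrix (fun v : {v : ι' // v ∉ S'} => (v : ι'))
          (fun v : {v : ι' // v ∉ S'} => (v : ι'))).det
        = (M.submatrix (fun v : {i0 : ι // i0 ∉ S} => (v : ι))
            (fun v : {i0 : ι // i0 ∉ S} => (v : ι))).det := by
      rw [← Matrix.det_submatrix_equiv_self φ]
      rfl
    rw [hdet]
    ring


section GoodStep
variable [DecidableEq V] [DecidableEq E] {src tgt : E → V} {R : Finset V} {T : Finset E}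

lemma good_step (hlf : ∀ e : E, src e ≠ tgt e) {i : V} {t0 : E}
    (hiR : i ∉ R) (ht0T : t0 ∈ T) (hinc : src t0 = i ∨ tgt t0 = i)
    (huniq : ∀ e ∈ T, (src e = i ∨ tgt e = i) → e = t0) :
    Good src tgt R T ↔ Good src tgt (insert i R) (T.erase t0) := by
  set T' := T.erase t0 with hT'
  have hTins : T = insert t0 T' := (Finset.insert_erase ht0T).symm
  have iso : ∀ e ∈ T', src e ≠ i ∧ tgt e ≠ i := by
    intro e he
    have heT : e ∈ T := Finset.mem_of_mem_erase he
    have hene : e ≠ t0 := Finset.ne_of_mem_erase he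
    constructor
    · intro hc; exact hene (huniq e heT (Or.inl hc))
    · intro hc; exact hene (huniq e heT (Or.inr hc))
  have hreach_i : ∀ b, Reach src tgt T' i b → i = b := fun b h => reach_isolated iso h
  obtain ⟨z, hz, hzne⟩ : ∃ z, ((src t0 = i ∧ tgt t0 = z) ∨ (src t0 = z ∧ tgt t0 = i)) ∧ z ≠ i := by
    rcases hinc with h | h
    · exact ⟨tgt t0, Or.inl ⟨h, rfl⟩, fun hc => hlf t0 (h.trans hc.symm)⟩
    · exact ⟨src t0, Or.inr ⟨rfl, h⟩, fun hc => hlf t0 (hc.trans h.symm)⟩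
  have hzi : Step src tgt T z i := by
    rcases hz with ⟨h1, h2⟩ | ⟨h1, h2⟩
    · exact ⟨t0, ht0T, Or.inr ⟨h1, h2⟩⟩
    · exact ⟨t0, ht0T, Or.inl ⟨h1, h2⟩⟩
  have hdec : ∀ a b : V, Reach src tgt T a b ↔ (Reach src tgt T' a b
      ∨ (Reach src tgt T' a (src t0) ∧ Reach src tgt T' (tgt t0) b)
      ∨ (Reach src tgt T' a (tgt t0) ∧ Reach src tgt T' (src t0) b)) := by
    intro a b
    rw [hTins]
    exact reach_insert
  have hdec2 : ∀ a b : V, Reach src tgt T a b ↔ (Reach src tgt T' a b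
      ∨ (Reach src tgt T' a i ∧ Reach src tgt T' z b)
      ∨ (Reach src tgt T' a z ∧ Reach src tgt T' i b)) := by
    intro a b
    rcases hz with ⟨h1, h2⟩ | ⟨h1, h2⟩ <;> rw [hdec a b, h1, h2] <;> tauto
  constructor
  · intro hG v
    by_cases hvi : v = i
    · refine ⟨i, ⟨Finset.mem_insert_self i R, by rw [hvi]; exact reach_refl i⟩, ?_⟩
      rintro u ⟨hu1, hu2⟩
      rw [hvi] at hu2
      exact (hreach_i u (reach_symm hu2)).symm
    · obtain ⟨u, ⟨hu1, hu2⟩, hu3⟩ := hG v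
      have hu2' : Reach src tgt T' u v := by
        rcases (hdec2 u v).mp hu2 with h | ⟨h1, h2⟩ | ⟨h1, h2⟩
        · exact h
        · exact absurd hu1 ((hreach_i u (reach_symm h1)) ▸ hiR)
        · exact absurd (hreach_i v h2).symm hvi
      refine ⟨u, ⟨Finset.mem_insert_of_mem hu1, hu2'⟩, ?_⟩
      rintro u' ⟨hu'1, hu'2⟩
      rcases Finset.mem_insert.mp hu'1 with rfl | hu'R
      · exact absurd (hreach_i v hu'2).symm hvi
      · exact hu3 u' ⟨hu'R, reach_mono (Finset.erase_subset t0 T) hu'2⟩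
  · intro hG' v
    have hex : ∃ u0, u0 ∈ R ∧ Reach src tgt T u0 v := by
      obtain ⟨u, ⟨hu1, hu2⟩, -⟩ := hG' v
      rcases Finset.mem_insert.mp hu1 with rfl | huR
      · have hvi : u = v := hreach_i v hu2
        obtain ⟨w, ⟨hw1, hw2⟩, -⟩ := hG' z
        rcases Finset.mem_insert.mp hw1 with rfl | hwR
        · exact absurd (hreach_i z hw2).symm hzne
        · refine ⟨w, hwR, ?_⟩
          have h1 : Reach src tgt T w z := reach_mono (Finset.erase_subset _ _) hw2
          have h2 : Reach src tgt T z v := hvi ▸ reach_step hzi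
          exact reach_trans h1 h2
      · exact ⟨u, huR, reach_mono (Finset.erase_subset _ _) hu2⟩
    obtain ⟨u0, hu01, hu02⟩ := hex
    have huniq2 : ∀ r1 r2 : V, r1 ∈ R → r2 ∈ R → Reach src tgt T r1 v →
        Reach src tgt T r2 v → r1 = r2 := by
      have key : ∀ r, r ∈ R → Reach src tgt T r v →
          (Reach src tgt T' r v ∨ (v = i ∧ Reach src tgt T' r z)) := by
        intro r hrR hr
        rcases (hdec2 r v).mp hr with h | ⟨ha, hb⟩ | ⟨ha, hb⟩
        · exact Or.inl h
        · exact absurd hrR ((hreach_i r (reach_symm ha)) ▸ hiR)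
        · exact Or.inr ⟨(hreach_i v hb).symm, ha⟩
      intro r1 r2 h1R h2R h1 h2
      rcases key r1 h1R h1 with k1 | ⟨hv1, k1⟩ <;> rcases key r2 h2R h2 with k2 | ⟨hv2, k2⟩
      · obtain ⟨u', -, hu'⟩ := hG' v
        exact (hu' r1 ⟨Finset.mem_insert_of_mem h1R, k1⟩).trans
          (hu' r2 ⟨Finset.mem_insert_of_mem h2R, k2⟩).symm
      · subst hv2
        exact absurd h1R ((hreach_i r1 (reach_symm k1)) ▸ hiR)
      · subst hv1
        exact absurd h2R ((hreach_i r2 (reach_symm k2)) ▸ hiR)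
      · obtain ⟨u', -, hu'⟩ := hG' z
        exact (hu' r1 ⟨Finset.mem_insert_of_mem h1R, k1⟩).trans
          (hu' r2 ⟨Finset.mem_insert_of_mem h2R, k2⟩).symm
    exact ⟨u0, ⟨hu01, hu02⟩, fun r ⟨hr1, hr2⟩ => huniq2 r u0 hr1 hu01 hr2 hu02⟩

end GoodStep

section DetSq
variable {src tgt : E → V}

lemma inc_eq_zero {e : E} {v : V} [DecidableEq V] (h1 : src e ≠ v) (h2 : tgt e ≠ v) :
    inc src tgt e v = 0 := by
  rw [inc, if_neg h2, if_neg h1, sub_zero]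

variable [Fintype V] [Fintype E] [DecidableEq V] [DecidableEq E]

/-- The number of edges of `T` incident to `v`. -/
noncomputable def degT [DecidableEq V] (src tgt : E → V) (T : Finset E) (v : V) : ℕ :=
  (T.filter (fun e => src e = v ∨ tgt e = v)).card

lemma detB_sq (hlf : ∀ e : E, src e ≠ tgt e) :
    ∀ (k : ℕ) (R : Finset V) (T : Finset E), T.card = k →
      ∀ g : {v : V // v ∉ R} ≃ {e : E // e ∈ T},
      ((Matrix.of fun i j : {v : V // v ∉ R} => inc src tgt (g j : E) (i : V)).det) ^ 2
        = if Good src tgt R T then 1 else 0 := by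
  intro k
  induction k with
  | zero =>
    intro R T hT g
    rw [Finset.card_eq_zero] at hT
    subst hT
    haveI hE : IsEmpty {e : E // e ∈ (∅ : Finset E)} :=
      ⟨fun x => absurd x.2 (Finset.notMem_empty _)⟩
    haveI hV : IsEmpty {v : V // v ∉ R} := ⟨fun x => hE.false (g x)⟩
    rw [Matrix.det_isEmpty, if_pos ?_]
    · norm_num
    · intro v
      have hvR : v ∈ R := by
        by_contra hc
        exact hV.false ⟨v, hc⟩
      exact ⟨v, ⟨hvR, reach_refl v⟩, fun u ⟨hu1, hu2⟩ => reach_empty.mp hu2⟩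
  | succ k ih =>
    intro R T hT g
    set B := Matrix.of fun i j : {v : V // v ∉ R} => inc src tgt (g j : E) (i : V) with hB
    by_cases h0 : ∃ i : {v : V // v ∉ R}, degT src tgt T i.1 = 0
    · obtain ⟨i, hi⟩ := h0
      rw [degT, Finset.card_eq_zero] at hi
      have hiso : ∀ e ∈ T, src e ≠ i.1 ∧ tgt e ≠ i.1 := by
        intro e he
        constructor
        · intro hc
          have h5 : e ∈ (∅ : Finset E) := by
            rw [← hi]; exact Finset.mem_filter.mpr ⟨he, Or.inl hc⟩
          exact Finset.notMem_empty e h5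
        · intro hc
          have h5 : e ∈ (∅ : Finset E) := by
            rw [← hi]; exact Finset.mem_filter.mpr ⟨he, Or.inr hc⟩
          exact Finset.notMem_empty e h5
      have hrow : ∀ j, B i j = 0 := fun j =>
        inc_eq_zero (hiso (g j : E) (g j).2).1 (hiso (g j : E) (g j).2).2
      have hGood : ¬ Good src tgt R T := by
        intro hG
        obtain ⟨u, ⟨hu1, hu2⟩, -⟩ := hG i.1
        have hiu := reach_isolated hiso (reach_symm hu2)
        rw [← hiu] at hu1
        exact i.2 hu1
      rw [Matrix.det_eq_zero_of_row_eq_zero i hrow, if_neg hGood]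
      norm_num
    · by_cases h1 : ∃ i : {v : V // v ∉ R}, degT src tgt T i.1 = 1
      · obtain ⟨i, hi⟩ := h1
        rw [degT, Finset.card_eq_one] at hi
        obtain ⟨t0, ht0⟩ := hi
        have ht0m : t0 ∈ T ∧ (src t0 = i.1 ∨ tgt t0 = i.1) := by
          have h : t0 ∈ ({t0} : Finset E) := Finset.mem_singleton_self t0
          rw [← ht0] at h
          exact Finset.mem_filter.mp h
        have huniq : ∀ e ∈ T, (src e = i.1 ∨ tgt e = i.1) → e = t0 := by
          intro e he hince
          have h : e ∈ ({t0} : Finset E) := by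
            rw [← ht0]; exact Finset.mem_filter.mpr ⟨he, hince⟩
          exact Finset.mem_singleton.mp h
        set j0 : {v : V // v ∉ R} := g.symm ⟨t0, ht0m.1⟩ with hj0
        set g2 : {v : V // v ∉ R} ≃ {e : E // e ∈ T} := (Equiv.swap i j0).trans g with hg2
        have hg2i : g2 i = ⟨t0, ht0m.1⟩ := by
          rw [hg2]
          simp only [Equiv.trans_apply, Equiv.swap_apply_left, hj0, Equiv.apply_symm_apply]
        set B2 := Matrix.of fun i' j : {v : V // v ∉ R} => inc src tgt (g2 j : E) (i' : V) with hB2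
        have hdetsq : B.det ^ 2 = B2.det ^ 2 := by
          have hB2B : B2 = B.submatrix id (Equiv.swap i j0) := by
            ext a b
            simp [hB2, hB, hg2, Matrix.submatrix_apply]
          rw [hB2B, Matrix.det_permute' (Equiv.swap i j0) B, mul_pow]
          rcases Int.units_eq_one_or (Equiv.Perm.sign (Equiv.swap i j0)) with h | h <;>
            rw [h] <;> norm_num
        have hrowB2 : ∀ j, ¬ j = i → B2 i j = 0 := by
          intro j hj
          have hne : (g2 j : E) ≠ t0 := by
            intro hc
            apply hj
            have h5 : g2 j = g2 i := by rw [hg2i]; exact Subtype.ext hc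
            exact g2.injective h5
          have h6 : ¬ (src (g2 j : E) = i.1 ∨ tgt (g2 j : E) = i.1) := fun hc =>
            hne (huniq _ (g2 j).2 hc)
          push_neg at h6
          exact inc_eq_zero h6.1 h6.2
        rw [hdetsq, det_row_single B2 i hrowB2, mul_pow]
        have hBii : B2 i i ^ 2 = 1 := by
          have h7 : B2 i i = inc src tgt t0 i.1 := by
            exact congrArg (fun e => inc src tgt e i.1) (congrArg Subtype.val hg2i)
          rw [h7]
          rcases ht0m.2 with h | h
          · have h2 : tgt t0 ≠ i.1 := fun hc => hlf t0 (h.trans hc.symm)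
            rw [inc, if_neg h2, if_pos h]
            norm_num
          · have h2 : src t0 ≠ i.1 := fun hc => hlf t0 (hc.trans h.symm)
            rw [inc, if_pos h, if_neg h2]
            norm_num
        rw [hBii, one_mul]
        set R' := insert i.1 R with hR'
        set T' := T.erase t0 with hT'p
        have hmemR' : ∀ v : V, v ∉ R' ↔ (v ∉ R ∧ v ≠ i.1) := by
          intro v
          rw [hR', Finset.mem_insert]
          tauto
        let eV : {v : V // v ∉ R'} ≃ {j : {v : V // v ∉ R} // ¬ j = i} :=
          { toFun := fun w => ⟨⟨w.1, ((hmemR' w.1).mp w.2).1⟩,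
              fun hc => ((hmemR' w.1).mp w.2).2 (congrArg Subtype.val hc)⟩
            invFun := fun u => ⟨u.1.1, (hmemR' u.1.1).mpr
              ⟨u.1.2, fun hc => u.2 (Subtype.ext hc)⟩⟩
            left_inv := fun w => rfl
            right_inv := fun u => rfl }
        let eMid : {j : {v : V // v ∉ R} // ¬ j = i} ≃ {u : {e : E // e ∈ T} // ¬ u = g2 i} :=
          Equiv.subtypeEquiv g2 (fun a => not_congr (g2.apply_eq_iff_eq).symm)
        let eT : {u : {e : E // e ∈ T} // ¬ u = g2 i} ≃ {e : E // e ∈ T'} :=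
          { toFun := fun u => ⟨u.1.1, Finset.mem_erase.mpr
              ⟨fun hc => u.2 (Subtype.ext (hc.trans (congrArg Subtype.val hg2i).symm)), u.1.2⟩⟩
            invFun := fun e' => ⟨⟨e'.1, Finset.mem_of_mem_erase e'.2⟩,
              fun hc => (Finset.ne_of_mem_erase e'.2)
                ((congrArg Subtype.val hc).trans (congrArg Subtype.val hg2i))⟩
            left_inv := fun u => rfl
            right_inv := fun e' => rfl }
        let g3 : {v : V // v ∉ R'} ≃ {e : E // e ∈ T'} := (eV.trans eMid).trans eT
        have hT'card : T'.card = k := by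
          rw [hT'p, Finset.card_erase_of_mem ht0m.1, hT]
          omega
        have hIH := ih R' T' hT'card g3
        have hDdet : (B2.submatrix
              (fun k2 : {j : {v : V // v ∉ R} // ¬ j = i} => (k2 : {v : V // v ∉ R}))
              (fun k2 : {j : {v : V // v ∉ R} // ¬ j = i} => (k2 : {v : V // v ∉ R}))).det
            = (Matrix.of fun a b : {v : V // v ∉ R'} => inc src tgt (g3 b : E) (a : V)).det := by
          rw [← Matrix.det_submatrix_equiv_self eV (B2.submatrix
            (fun k2 => (k2 : {v : V // v ∉ R})) (fun k2 => (k2 : {v : V // v ∉ R})))]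
          rfl
        rw [hDdet, hIH]
        have hgs := good_step (R := R) (T := T) hlf i.2 ht0m.1 ht0m.2 huniq
        rw [hR', hT'p]
        exact (if_congr hgs (rfl : (1:ℤ) = 1) (rfl : (0:ℤ) = 0)).symm
      · -- every non-root vertex has degree at least 2
        push_neg at h0 h1
        have hdeg2 : ∀ i : {v : V // v ∉ R}, 2 ≤ degT src tgt T i.1 := by
          intro i
          have a0 := h0 i
          have a1 := h1 i
          omega
        haveI hne : Nonempty {v : V // v ∉ R} := by
          have h2 : 0 < Fintype.card {e : E // e ∈ T} := by
            rw [Fintype.card_coe, hT]; omega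
          have h3 : 0 < Fintype.card {v : V // v ∉ R} := by
            rw [Fintype.card_congr g]; exact h2
          exact Fintype.card_pos_iff.mp h3
        have htot : ∑ v : V, degT src tgt T v = 2 * T.card := by
          unfold degT
          have hcf : ∀ v : V, (T.filter (fun e => src e = v ∨ tgt e = v)).card
              = ∑ e ∈ T, (if src e = v ∨ tgt e = v then 1 else 0) := by
            intro v
            rw [Finset.card_filter]
          simp_rw [hcf]
          rw [Finset.sum_comm]
          have hpair : ∀ e ∈ T, (∑ v : V, if src e = v ∨ tgt e = v then 1 else 0) = 2 := by
            intro e _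
            have hfil : Finset.univ.filter (fun v => src e = v ∨ tgt e = v)
                = {src e, tgt e} := by
              ext v
              simp only [Finset.mem_filter, Finset.mem_univ, true_and, Finset.mem_insert,
                Finset.mem_singleton]
              constructor
              · rintro (h | h) <;> [exact Or.inl h.symm; exact Or.inr h.symm]
              · rintro (h | h) <;> [exact Or.inl h.symm; exact Or.inr h.symm]
            rw [← Finset.card_filter, hfil, Finset.card_pair (hlf e)]
          rw [Finset.sum_congr rfl hpair, Finset.sum_const, smul_eq_mul, mul_comm]
        have hRdeg : ∀ r ∈ R, degT src tgt T r = 0 := by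
          have hsplit := Finset.sum_filter_add_sum_filter_not Finset.univ
            (fun v : V => v ∉ R) (degT src tgt T)
          have hsplit2 := hsplit.trans htot
          have hlow : 2 * T.card ≤ ∑ v ∈ Finset.univ.filter (fun v : V => v ∉ R),
              degT src tgt T v := by
            calc 2 * T.card = (Finset.univ.filter (fun v : V => v ∉ R)).card * 2 := by
                  rw [← Fintype.card_subtype, Fintype.card_congr g, Fintype.card_coe]
                  ring
              _ ≤ _ := by
                  rw [← smul_eq_mul, ← Finset.sum_const]
                  exact Finset.sum_le_sum (fun v hv =>
                    hdeg2 ⟨v, (Finset.mem_filter.mp hv).2⟩)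
          have hzero : ∑ v ∈ Finset.univ.filter (fun v : V => ¬ v ∉ R),
              degT src tgt T v = 0 := by omega
          intro r hr
          have hrm : r ∈ Finset.univ.filter (fun v : V => ¬ v ∉ R) := by
            simp [hr]
          exact (Finset.sum_eq_zero_iff.mp hzero) r hrm
        have hEnd : ∀ e ∈ T, src e ∉ R ∧ tgt e ∉ R := by
          intro e he
          constructor
          · intro hc
            have h4 := hRdeg _ hc
            rw [degT, Finset.card_eq_zero] at h4
            have h5 : e ∈ (∅ : Finset E) := by
              rw [← h4]; exact Finset.mem_filter.mpr ⟨he, Or.inl rfl⟩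
            exact Finset.notMem_empty e h5
          · intro hc
            have h4 := hRdeg _ hc
            rw [degT, Finset.card_eq_zero] at h4
            have h5 : e ∈ (∅ : Finset E) := by
              rw [← h4]; exact Finset.mem_filter.mpr ⟨he, Or.inr rfl⟩
            exact Finset.notMem_empty e h5
        have hsum : ∀ j, ∑ i2 : {v : V // v ∉ R}, B i2 j = 0 := by
          intro j
          have hall : ∑ v : V, inc src tgt (g j : E) v = 0 := by
            simp [inc, Finset.sum_sub_distrib, Finset.sum_ite_eq]
          have hsub : ∑ i2 : {v : V // v ∉ R}, B i2 j
              = ∑ v ∈ Finset.univ.filter (fun v : V => v ∉ R), inc src tgt (g j : E) v :=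
            (Finset.sum_subtype (Finset.univ.filter (fun v : V => v ∉ R))
              (fun v => by simp) (fun v => inc src tgt (g j : E) v)).symm
          have hz2 : ∑ v ∈ Finset.univ.filter (fun v : V => ¬ v ∉ R),
              inc src tgt (g j : E) v = 0 :=
            Finset.sum_eq_zero (fun v hv => by
              have hvR : v ∈ R := not_not.mp (Finset.mem_filter.mp hv).2
              refine inc_eq_zero (fun hc => ?_) (fun hc => ?_)
              · exact (hEnd _ (g j).2).1 (hc ▸ hvR)
              · exact (hEnd _ (g j).2).2 (hc ▸ hvR))
          have hsplit := Finset.sum_filter_add_sum_filter_not Finset.univ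
            (fun v : V => v ∉ R) (fun v => inc src tgt (g j : E) v)
          rw [hall, hz2, add_zero] at hsplit
          rw [hsub, hsplit]
        have hdet0 : B.det = 0 := by
          refine Matrix.exists_vecMul_eq_zero_iff.mp ⟨(fun _ => 1), ?_, ?_⟩
          · intro hc
            have h8 := congrFun hc (Classical.arbitrary _)
            norm_num at h8
          · funext j
            show ∑ i2 : {v : V // v ∉ R}, 1 * B i2 j = (0 : {v : V // v ∉ R} → ℤ) j
            simp only [one_mul, Pi.zero_apply]
            exact hsum j
        have hGood : ¬ Good src tgt R T := by
          intro hG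
          obtain ⟨i0⟩ := hne
          obtain ⟨u, ⟨hu1, hu2⟩, -⟩ := hG i0.1
          have hstep : ∀ a b : V, Step src tgt T a b → ((a ∈ R) ↔ (b ∈ R)) := by
            rintro a b ⟨e, he, ⟨hx1, hx2⟩ | ⟨hx1, hx2⟩⟩
            · constructor <;> intro hm <;> exfalso
              · exact (hEnd e he).1 (by rw [hx1]; exact hm)
              · exact (hEnd e he).2 (by rw [hx2]; exact hm)
            · constructor <;> intro hm <;> exfalso
              · exact (hEnd e he).2 (by rw [hx2]; exact hm)
              · exact (hEnd e he).1 (by rw [hx1]; exact hm)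
          exact i0.2 ((reach_iff_inv _ hstep hu2).mp hu1)
        rw [hdet0, if_neg hGood]
        norm_num

end DetSq

section CB
variable {A : Type} [CommRing A]

lemma det_mul_expand {ι κ : Type} [Fintype ι] [Fintype κ] [DecidableEq ι] [DecidableEq κ]
    (M : Matrix ι κ A) (N : Matrix κ ι A) :
    (M * N).det = ∑ f : ι → κ, (∏ i, N (f i) i) * (M.submatrix id f).det := by
  simp_rw [Matrix.det_apply', Matrix.mul_apply, Finset.prod_univ_sum, Fintype.piFinset_univ,
    Finset.mul_sum]
  rw [Finset.sum_comm]
  refine Finset.sum_congr rfl (fun f _ => ?_)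
  refine Finset.sum_congr rfl (fun σ _ => ?_)
  simp only [Matrix.submatrix_apply, id_eq, Finset.prod_mul_distrib, Int.cast_id]
  ring

lemma det_mul_expand_inj {ι κ : Type} [Fintype ι] [Fintype κ] [DecidableEq ι] [DecidableEq κ]
    (M : Matrix ι κ A) (N : Matrix κ ι A) :
    (M * N).det = ∑ f ∈ Finset.univ.filter (fun f : ι → κ => Function.Injective f),
      (∏ i, N (f i) i) * (M.submatrix id f).det := by
  rw [det_mul_expand]
  refine (Finset.sum_filter_of_ne ?_).symm
  intro f _ hne
  by_contra hinj
  apply hne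
  have hdet : (M.submatrix id f).det = 0 := by
    unfold Function.Injective at hinj
    push_neg at hinj
    obtain ⟨a, b, h1, h2⟩ := hinj
    exact Matrix.det_zero_of_column_eq h2 (fun k => by simp [Matrix.submatrix_apply, h1])
  rw [hdet, mul_zero]

end CB

section Lap
variable {src tgt : E → V} [Fintype V] [Fintype E] [DecidableEq V] [DecidableEq E]

lemma lap_entry (hlf : ∀ e : E, src e ≠ tgt e) (a b : V) :
    LapDegAdj src tgt a b = ∑ e : E, inc src tgt e a * inc src tgt e b := by
  by_cases hab : a = b
  · subst hab
    have hterm : ∀ e : E, inc src tgt e a * inc src tgt e a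
        = (if src e = a then (1:ℤ) else 0) + (if tgt e = a then 1 else 0) := by
      intro e
      by_cases h1 : src e = a <;> by_cases h2 : tgt e = a
      · exact absurd (h1.trans h2.symm) (hlf e)
      · norm_num [inc, h1, h2]
      · norm_num [inc, h1, h2]
      · norm_num [inc, h1, h2]
    rw [Finset.sum_congr rfl (fun e _ => hterm e), Finset.sum_add_distrib,
      Finset.sum_boole, Finset.sum_boole]
    rw [LapDegAdj]
    simp only [Matrix.of_apply, if_pos rfl]
    have hz : (Finset.univ.filter fun e =>
        (src e = a ∧ tgt e = a) ∨ (src e = a ∧ tgt e = a)).card = 0 := by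
      rw [Finset.card_eq_zero, Finset.filter_eq_empty_iff]
      rintro e -
      rintro (⟨h1, h2⟩ | ⟨h1, h2⟩) <;> exact hlf e (h1.trans h2.symm)
    rw [hz]
    push_cast
    ring
  · have hba : ¬ b = a := fun hc => hab hc.symm
    have hterm : ∀ e : E, inc src tgt e a * inc src tgt e b
        = -(if (src e = a ∧ tgt e = b) ∨ (src e = b ∧ tgt e = a) then (1:ℤ) else 0) := by
      intro e
      by_cases h1 : src e = a <;> by_cases h2 : tgt e = b <;>
        by_cases h3 : src e = b <;> by_cases h4 : tgt e = a
      all_goals first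
        | (exact absurd (h1.symm.trans h3) hab)
        | (exact absurd (h4.symm.trans h2) hab)
        | (norm_num [inc, h1, h2, h3, h4, hab, hba])
    rw [Finset.sum_congr rfl (fun e _ => hterm e), Finset.sum_neg_distrib,
      Finset.sum_boole]
    rw [LapDegAdj]
    simp only [Matrix.of_apply, if_neg hab]
    ring

lemma minor_det (hlf : ∀ e : E, src e ≠ tgt e) (R : Finset V) :
    ((LapDegAdj src tgt).submatrix (fun v : {v : V // v ∉ R} => (v : V))
        (fun v : {v : V // v ∉ R} => (v : V))).det
      = ((Finset.univ.filter (fun T : Finset E =>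
          T.card = Fintype.card {v : V // v ∉ R} ∧ Good src tgt R T)).card : ℤ) := by
  classical
  set Am : Matrix {v : V // v ∉ R} E ℤ := Matrix.of (fun i e => inc src tgt e i.1) with hAm
  have hfac : (LapDegAdj src tgt).submatrix (fun v : {v : V // v ∉ R} => (v : V))
      (fun v : {v : V // v ∉ R} => (v : V)) = Am * Amᵀ := by
    ext a b
    rw [Matrix.mul_apply, Matrix.submatrix_apply, lap_entry hlf]
    simp [hAm, Matrix.transpose_apply, mul_comm]
  rw [hfac, det_mul_expand_inj]
  rw [← Finset.sum_fiberwise_of_maps_to (g := fun f : {v : V // v ∉ R} → E =>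
      Finset.univ.image f)
      (t := Finset.univ.filter (fun T : Finset E => T.card = Fintype.card {v : V // v ∉ R}))
      (fun f hf => by
        simp only [Finset.mem_filter, Finset.mem_univ, true_and] at hf ⊢
        rw [Finset.card_image_of_injective _ hf, Finset.card_univ])]
  have hsplit : (Finset.univ.filter (fun T : Finset E =>
      T.card = Fintype.card {v : V // v ∉ R} ∧ Good src tgt R T))
      = (Finset.univ.filter (fun T : Finset E =>
          T.card = Fintype.card {v : V // v ∉ R})).filter (fun T => Good src tgt R T) := by
    rw [Finset.filter_filter]
  rw [hsplit, ← Finset.sum_boole]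
  refine Finset.sum_congr rfl (fun T hT => ?_)
  simp only [Finset.mem_filter, Finset.mem_univ, true_and] at hT
  have hcard : Fintype.card {v : V // v ∉ R} = Fintype.card {e : E // e ∈ T} := by
    rw [Fintype.card_coe, hT]
  set gT : {v : V // v ∉ R} ≃ {e : E // e ∈ T} := Fintype.equivOfCardEq hcard with hgT
  set u : {v : V // v ∉ R} → E := fun i => (gT i : E) with hu
  have huinj : Function.Injective u := fun a b h => gT.injective (Subtype.ext h)
  have hfib : (Finset.univ.filter (fun f : {v : V // v ∉ R} → E =>
      Function.Injective f)).filter (fun f => Finset.univ.image f = T)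
      = Finset.univ.image (fun σ : Equiv.Perm {v : V // v ∉ R} => u ∘ σ) := by
    ext f
    simp only [Finset.mem_filter, Finset.mem_univ, true_and, Finset.mem_image]
    constructor
    · rintro ⟨hinj, him⟩
      have hmem : ∀ i, f i ∈ T := fun i =>
        him ▸ Finset.mem_image_of_mem f (Finset.mem_univ i)
      have hf'bij : Function.Bijective (fun i => (⟨f i, hmem i⟩ : {e : E // e ∈ T})) := by
        rw [Fintype.bijective_iff_injective_and_card]
        exact ⟨fun a b h => hinj (congrArg Subtype.val h), hcard⟩
      refine ⟨(Equiv.ofBijective _ hf'bij).trans gT.symm, ?_⟩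
      funext i
      show u (gT.symm ⟨f i, hmem i⟩) = f i
      rw [hu]
      simp only [Equiv.apply_symm_apply]
    · rintro ⟨σ, rfl⟩
      refine ⟨fun a b h => σ.injective (huinj h), ?_⟩
      ext e
      simp only [Finset.mem_image, Finset.mem_univ, true_and]
      constructor
      · rintro ⟨i, rfl⟩
        exact (gT (σ i)).2
      · intro he
        exact ⟨σ.symm (gT.symm ⟨e, he⟩), by
          show u (σ (σ.symm (gT.symm ⟨e, he⟩))) = e
          rw [Equiv.apply_symm_apply, hu]
          simp only [Equiv.apply_symm_apply]⟩
  rw [hfib, Finset.sum_image (fun σ _ τ _ h => by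
    ext i
    exact congrArg Subtype.val (huinj (congrFun h i)))]
  have hterm : ∀ σ : Equiv.Perm {v : V // v ∉ R},
      (∏ i, Amᵀ ((u ∘ σ) i) i) * (Am.submatrix id (u ∘ σ)).det
      = ((Equiv.Perm.sign σ : ℤˣ) : ℤ) *
        ((∏ i, (Am.submatrix id u) i (σ i)) * (Am.submatrix id u).det) := by
    intro σ
    have h1 : Am.submatrix id (u ∘ σ) = (Am.submatrix id u).submatrix id σ := by
      rw [Matrix.submatrix_submatrix]
      rfl
    rw [h1, Matrix.det_permute']
    simp only [Matrix.transpose_apply, Matrix.submatrix_apply, id_eq, Function.comp_apply,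
      Int.cast_id]
    ring
  rw [Finset.sum_congr rfl (fun σ _ => hterm σ)]
  have h2 : ∑ σ : Equiv.Perm {v : V // v ∉ R}, ((Equiv.Perm.sign σ : ℤˣ) : ℤ) *
      ((∏ i, (Am.submatrix id u) i (σ i)) * (Am.submatrix id u).det)
      = (Am.submatrix id u).det * ((Am.submatrix id u)ᵀ).det := by
    rw [Matrix.det_apply' ((Am.submatrix id u)ᵀ), Finset.mul_sum]
    refine Finset.sum_congr rfl (fun σ _ => ?_)
    simp only [Matrix.transpose_apply, Int.cast_id]
    ring
  rw [h2, Matrix.det_transpose, ← sq]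
  have hfin := detB_sq hlf T.card R T rfl gT
  have heq : (Matrix.of fun i j : {v : V // v ∉ R} => inc src tgt (gT j : E) (i : V))
      = Am.submatrix id u := by
    ext a b
    simp [hAm, hu, Matrix.submatrix_apply]
  rw [heq] at hfin
  rw [hfin]

end Lap

section Part2
variable {src tgt : E → V} [Fintype V] [Fintype E]
lemma part2 (K : ℕ) :
    Nat.card {p : Finset E × Finset V //
        IsRootedSF src tgt p.1 p.2 ∧ ncomp src tgt p.1 = K}
      = ∑ F ∈ Finset.univ.filter
          (fun F : Finset E => IsSpForest src tgt F ∧ ncomp src tgt F = K),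
          multF src tgt F := by
  rw [Nat.card_eq_fintype_card, Fintype.card_subtype]
  rw [Finset.card_eq_sum_card_fiberwise (f := Prod.fst)
    (t := Finset.univ.filter (fun F : Finset E => IsSpForest src tgt F ∧ ncomp src tgt F = K))
    (fun p hp => by
      simp only [Finset.mem_coe, Finset.mem_filter, Finset.mem_univ, true_and] at hp ⊢
      exact ⟨hp.1.1, hp.2⟩)]
  refine Finset.sum_congr rfl (fun F hF => ?_)
  simp only [Finset.mem_filter, Finset.mem_univ, true_and] at hF
  rw [← card_good_roots F, Nat.card_eq_fintype_card, Fintype.card_subtype]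
  refine Finset.card_nbij (fun p => p.2) ?_ ?_ ?_
  · intro p hp
    simp only [Finset.mem_coe, Finset.mem_filter, Finset.mem_univ, true_and] at hp ⊢
    obtain ⟨⟨h1, -⟩, h2⟩ := hp
    rw [h2] at h1
    exact h1.2
  · intro p hp p' hp' hpp'
    simp only [Finset.mem_coe, Finset.mem_filter, Finset.mem_univ, true_and] at hp hp'
    exact Prod.ext (hp.2.trans hp'.2.symm) hpp'
  · intro R hR
    simp only [Finset.mem_coe, Finset.mem_filter, Finset.mem_univ, true_and] at hR
    refine ⟨(F, R), by
      simp only [Finset.mem_coe, Finset.mem_filter, Finset.mem_univ, true_and]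
      tauto, rfl⟩

end Part2


section Final
variable {src tgt : E → V} [Fintype V] [Fintype E] [DecidableEq V] [DecidableEq E]

lemma card_subtype_compl' (S : Finset V) :
    Fintype.card {v : V // v ∉ S} = Sᶜ.card := by
  rw [Fintype.card_subtype]
  congr 1
  ext v
  simp [Finset.mem_compl]

/-- The number of rooted spanning forests with `n - j` components, counted via root sets. -/
noncomputable def BJ (src tgt : E → V) [Fintype V] [Fintype E] [DecidableEq V] [DecidableEq E]
    (j : ℕ) : ℕ :=
  ∑ S ∈ Finset.univ.filter (fun S : Finset V => Sᶜ.card = j),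
    (Finset.univ.filter (fun T : Finset E =>
      T.card = Fintype.card {v : V // v ∉ S} ∧ Good src tgt S T)).card

lemma charpoly_expand (hlf : ∀ e : E, src e ≠ tgt e) :
    (LapDegAdj src tgt).charpoly = ∑ S : Finset V,
      Polynomial.C ((-1:ℤ)^(Sᶜ.card) * ((Finset.univ.filter (fun T : Finset E =>
          T.card = Fintype.card {v : V // v ∉ S} ∧ Good src tgt S T)).card : ℤ))
        * Polynomial.X ^ S.card := by
  rw [Matrix.charpoly]
  have h1 : Matrix.charmatrix (LapDegAdj src tgt)
      = (fun i j => if i = j then (Polynomial.X : Polynomial ℤ) else 0)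
        + (fun i j => - Polynomial.C (LapDegAdj src tgt i j)) := by
    funext i j
    show Matrix.charmatrix (LapDegAdj src tgt) i j
        = (if i = j then (Polynomial.X : Polynomial ℤ) else 0)
          + (- Polynomial.C (LapDegAdj src tgt i j))
    by_cases h : i = j
    · subst h
      rw [Matrix.charmatrix_apply_eq, if_pos rfl, sub_eq_add_neg]
    · rw [Matrix.charmatrix_apply_ne _ _ _ h, if_neg h, zero_add]
  have key : (Matrix.charmatrix (LapDegAdj src tgt)).det
      = ∑ S : Finset V, Matrix.detRowAlternating
          (S.piecewise (fun i j => if i = j then (Polynomial.X : Polynomial ℤ) else 0)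
            (fun i j => - Polynomial.C (LapDegAdj src tgt i j))) := by
    show Matrix.detRowAlternating (Matrix.charmatrix (LapDegAdj src tgt)) = _
    rw [h1]
    exact (Matrix.detRowAlternating).toMultilinearMap.map_add_univ _ _
  rw [key]
  refine Finset.sum_congr rfl (fun S _ => ?_)
  set MS : Matrix V V (Polynomial ℤ) := S.piecewise (fun i j => if i = j then (Polynomial.X : Polynomial ℤ) else 0)
    (fun i j => - Polynomial.C (LapDegAdj src tgt i j)) with hMS
  have hP : ∀ i ∈ S, ∀ j, MS i j = if i = j then (Polynomial.X : Polynomial ℤ) else 0 := by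
    intro i hi j
    rw [hMS]
    rw [Finset.piecewise_eq_of_mem _ _ _ hi]
  show (MS : Matrix V V (Polynomial ℤ)).det = _
  rw [det_diag_rows S.card MS Polynomial.X S rfl hP]
  have hsub : MS.submatrix (fun v : {i : V // i ∉ S} => (v : V))
      (fun v : {i : V // i ∉ S} => (v : V))
      = - (Polynomial.C : ℤ →+* Polynomial ℤ).mapMatrix
          ((LapDegAdj src tgt).submatrix (fun v : {i : V // i ∉ S} => (v : V))
            (fun v : {i : V // i ∉ S} => (v : V))) := by
    ext a b
    rw [Matrix.submatrix_apply, hMS, Finset.piecewise_eq_of_notMem _ _ _ a.2]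
    simp [RingHom.mapMatrix_apply, Matrix.map_apply]
  rw [hsub, Matrix.det_neg, ← RingHom.map_det, minor_det hlf S, card_subtype_compl' S]
  simp only [_root_.map_mul, map_pow, _root_.map_neg, _root_.map_one, map_natCast]
  ring

lemma count_pairs (j : ℕ) (hj : j ≤ Fintype.card V) :
    BJ src tgt j = Nat.card {p : Finset E × Finset V //
        IsRootedSF src tgt p.1 p.2 ∧ ncomp src tgt p.1 = Fintype.card V - j} := by
  symm
  rw [Nat.card_eq_fintype_card, Fintype.card_subtype]
  rw [Finset.card_eq_sum_card_fiberwise (f := Prod.snd)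
    (t := Finset.univ.filter (fun S : Finset V => Sᶜ.card = j))
    (fun p hp => by
      simp only [Finset.mem_coe, Finset.mem_filter, Finset.mem_univ, true_and] at hp ⊢
      have hcard := ncomp_eq_card_of_good (isRootedSF_good hp.1)
      have h2 := Finset.card_add_card_compl p.2
      omega)]
  refine Finset.sum_congr rfl (fun S hS => ?_)
  simp only [Finset.mem_filter, Finset.mem_univ, true_and] at hS
  refine Finset.card_nbij (fun p => p.1) ?_ ?_ ?_
  · intro p hp
    simp only [Finset.mem_coe, Finset.mem_filter, Finset.mem_univ, true_and] at hp ⊢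
    obtain ⟨⟨hroot, hncomp⟩, hsnd⟩ := hp
    rw [hsnd] at hroot
    constructor
    · have hsf := hroot.1
      rw [IsSpForest] at hsf
      rw [card_subtype_compl', hS]
      omega
    · exact isRootedSF_good hroot
  · intro p hp p' hp' hpp'
    simp only [Finset.mem_coe, Finset.mem_filter, Finset.mem_univ, true_and] at hp hp'
    exact Prod.ext hpp' (hp.2.trans hp'.2.symm)
  · intro T hT
    simp only [Finset.mem_coe, Finset.mem_filter, Finset.mem_univ, true_and] at hT
    have hTcard : T.card = j := by rw [hT.1, card_subtype_compl', hS]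
    have hScard : S.card = Fintype.card V - j := by
      have := Finset.card_add_card_compl S
      omega
    have hroot : IsRootedSF src tgt T S := by
      rw [isRootedSF_iff_good (by omega : T.card + S.card = Fintype.card V)]
      exact hT.2
    refine ⟨(T, S), ?_, rfl⟩
    simp only [Finset.mem_coe, Finset.mem_filter, Finset.mem_univ, true_and]
    have hncomp : ncomp src tgt T = Fintype.card V - j := by
      rw [ncomp_eq_card_of_good hT.2, hScard]
    tauto

lemma charpoly_grouped (hlf : ∀ e : E, src e ≠ tgt e) :
    (LapDegAdj src tgt).charpoly = ∑ j ∈ Finset.range (Fintype.card V + 1),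
      Polynomial.C ((-1:ℤ)^j * (BJ src tgt j : ℤ)) * Polynomial.X ^ (Fintype.card V - j) := by
  rw [charpoly_expand hlf]
  rw [← Finset.sum_fiberwise_of_maps_to (g := fun S : Finset V => Sᶜ.card)
    (t := Finset.range (Fintype.card V + 1))
    (fun S _ => Finset.mem_range.mpr (by
      show Sᶜ.card < Fintype.card V + 1
      have h1 := Finset.card_le_univ Sᶜ
      have h2 : (Finset.univ : Finset V).card = Fintype.card V := Finset.card_univ
      omega))]
  refine Finset.sum_congr rfl (fun j hj => ?_)
  rw [BJ, Nat.cast_sum, Finset.mul_sum, map_sum, Finset.sum_mul]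
  refine Finset.sum_congr rfl (fun S hS => ?_)
  have h1 : Sᶜ.card = j := (Finset.mem_filter.mp hS).2
  have h2 : S.card = Fintype.card V - j := by
    have := Finset.card_add_card_compl S
    omega
  rw [h1, h2]

lemma BJ_zero : BJ src tgt 0 = 1 := by
  have hGe : Good src tgt Finset.univ (∅ : Finset E) := by
    intro v
    exact ⟨v, ⟨Finset.mem_univ v, reach_refl v⟩, fun u ⟨_, hu2⟩ => reach_empty.mp hu2⟩
  have hf : Finset.univ.filter (fun S : Finset V => Sᶜ.card = 0) = {Finset.univ} := by
    ext S
    simp only [Finset.mem_filter, Finset.mem_univ, true_and, Finset.mem_singleton,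
      Finset.card_eq_zero]
    constructor
    · intro h
      have : ∀ v : V, v ∈ S := by
        intro v
        by_contra hc
        have : v ∈ Sᶜ := Finset.mem_compl.mpr hc
        rw [h] at this
        exact Finset.notMem_empty v this
      exact Finset.eq_univ_iff_forall.mpr this
    · rintro rfl
      exact Finset.compl_univ
  rw [BJ, hf, Finset.sum_singleton]
  have hcz : Fintype.card {v : V // v ∉ (Finset.univ : Finset V)} = 0 := by
    rw [card_subtype_compl', Finset.compl_univ, Finset.card_empty]
  have hset : Finset.univ.filter (fun T : Finset E =>
      T.card = Fintype.card {v : V // v ∉ (Finset.univ : Finset V)}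
        ∧ Good src tgt Finset.univ T) = {∅} := by
    ext T
    rw [Finset.mem_filter, hcz]
    simp only [Finset.mem_univ, true_and, Finset.mem_singleton, Finset.card_eq_zero]
    constructor
    · rintro ⟨h1, -⟩; exact h1
    · rintro rfl
      exact ⟨rfl, hGe⟩
  rw [hset, Finset.card_singleton]

lemma BJ_top (hV : 1 ≤ Fintype.card V) : BJ src tgt (Fintype.card V) = 0 := by
  refine Finset.sum_eq_zero (fun S hS => ?_)
  have hS0 : S = ∅ := by
    have h1 := (Finset.mem_filter.mp hS).2
    have h2 := Finset.card_add_card_compl S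
    rw [← Finset.card_eq_zero]
    omega
  subst hS0
  rw [Finset.card_eq_zero, Finset.filter_eq_empty_iff]
  intro T _
  rintro ⟨-, hGood⟩
  obtain ⟨v⟩ : Nonempty V := Fintype.card_pos_iff.mp (by omega)
  obtain ⟨u, ⟨hu1, -⟩, -⟩ := hGood v
  exact absurd hu1 (Finset.notMem_empty u)

end Final

/-- (All minors matrix tree theorem.) For a finite graph `H` with
`n` vertices, `det(T·Id - Δ(H)) = T^n + Σ_{j=1}^{n-1} (-1)^j b_j(H) T^{n-j}` where
`b_j(H)` is the number of rooted spanning forests of `H` with `n - j` components;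
moreover for each `K`, the number of rooted spanning forests with `K` components equals
`Σ_F mult(F)` over spanning forests `F` with `K` components. -/
theorem stmt13 {V E : Type} [Fintype V] [Fintype E] [DecidableEq V] [DecidableEq E]
    (src tgt : E → V) (hloopfree : ∀ e : E, src e ≠ tgt e)
    (n : ℕ) (hn : n = Fintype.card V) :
    (LapDegAdj src tgt).charpoly
        = Polynomial.X ^ n + ∑ j ∈ Finset.Icc 1 (n - 1),
            Polynomial.C ((-1 : ℤ) ^ j *
                (Nat.card {p : Finset E × Finset V //
                    IsRootedSF src tgt p.1 p.2 ∧ ncomp src tgt p.1 = n - j} : ℤ))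
              * Polynomial.X ^ (n - j)
    ∧ ∀ K : ℕ,
        Nat.card {p : Finset E × Finset V //
            IsRootedSF src tgt p.1 p.2 ∧ ncomp src tgt p.1 = K}
          = ∑ F ∈ Finset.univ.filter
              (fun F : Finset E => IsSpForest src tgt F ∧ ncomp src tgt F = K),
              multF src tgt F := by
  subst hn
  refine ⟨?_, fun K => part2 K⟩
  rw [charpoly_grouped hloopfree]
  by_cases hN0 : Fintype.card V = 0
  · rw [hN0]
    rw [show Finset.range (0 + 1) = {0} from rfl, Finset.sum_singleton]
    have hIcc : Finset.Icc 1 (0 - 1) = (∅ : Finset ℕ) := by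
      simp
    rw [hIcc, Finset.sum_empty, add_zero, BJ_zero]
    norm_num
  · have h1N : 1 ≤ Fintype.card V := Nat.one_le_iff_ne_zero.mpr hN0
    have hsplit1 : Finset.range (Fintype.card V + 1)
        = insert 0 (Finset.Icc 1 (Fintype.card V)) := by
      ext x; simp [Nat.lt_succ_iff]; omega
    rw [hsplit1, Finset.sum_insert (by simp)]
    have hsplit2 : Finset.Icc 1 (Fintype.card V)
        = insert (Fintype.card V) (Finset.Icc 1 (Fintype.card V - 1)) := by
      ext x; simp; omega
    rw [hsplit2, Finset.sum_insert (by simp; omega)]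
    rw [BJ_zero, BJ_top h1N]
    have hsum : ∑ j ∈ Finset.Icc 1 (Fintype.card V - 1),
        Polynomial.C ((-1:ℤ)^j * (BJ src tgt j : ℤ)) * Polynomial.X ^ (Fintype.card V - j)
        = ∑ j ∈ Finset.Icc 1 (Fintype.card V - 1),
          Polynomial.C ((-1 : ℤ) ^ j *
            (Nat.card {p : Finset E × Finset V //
                IsRootedSF src tgt p.1 p.2 ∧ ncomp src tgt p.1 = Fintype.card V - j} : ℤ))
          * Polynomial.X ^ (Fintype.card V - j) := by
      refine Finset.sum_congr rfl (fun j hj => ?_)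
      have hjle : j ≤ Fintype.card V := by
        have := Finset.mem_Icc.mp hj
        omega
      rw [count_pairs j hjle]
    rw [hsum]
    norm_num

end Mesh
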